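/- Let z ∈ Z^m be sampled coordinatewise from the discrete Gaussian D_σ on Z with standard deviation σ, for m = ℓ·d. Then Pr[‖z‖₂ ≤ σ√(2m)] > 1 − 2^{−m/8}. -/

import Mathlib

open scoped ENNReal
open Real

lemma sumG {c : ℝ} (hc : 0 < c) : Summable fun n : ℤ => Real.exp (-c * (n:ℝ)^2) := by
  have hgeo : Summable fun n : ℕ => Real.exp (-c) ^ n :=
    summable_geometric_of_lt_one (Real.exp_pos (-c)).le
      (Real.exp_lt_one_iff.mpr (by linarith))
  have hnat : Summable fun n : ℕ => Real.exp (-c * (n:ℝ)^2) := by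
    refine Summable.of_nonneg_of_le (fun n => (Real.exp_pos _).le) (fun n => ?_) hgeo
    rw [← Real.exp_nat_mul]
    apply Real.exp_le_exp.mpr
    have h2 : (n:ℝ) ≤ (n:ℝ)^2 := by
      rcases Nat.eq_zero_or_pos n with h | h
      · simp [h]
      · have h1 : (1:ℝ) ≤ (n:ℝ) := by exact_mod_cast h
        nlinarith
    nlinarith
  exact Summable.of_nat_of_neg (hnat.congr fun n => by norm_cast)
    (hnat.congr fun n => by push_cast; ring_nf)

lemma sumG' {c : ℝ} (hc : 0 < c) : Summable fun n : ℤ => Real.exp (-(n:ℝ)^2 / c) := by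
  refine (sumG (c := c⁻¹) (by positivity)).congr fun n => ?_
  congr 1
  field_simp

lemma tsum_pi_pow (f : ℤ → ℝ≥0∞) :
    ∀ n : ℕ, ∑' z : Fin n → ℤ, ∏ i, f (z i) = (∑' x : ℤ, f x) ^ n := by
  intro n
  induction n with
  | zero =>
    rw [tsum_eq_single (fun _ => 0) (fun b hb => absurd (Subsingleton.elim b _) hb)]
    simp
  | succ n ih =>
    rw [← (Fin.consEquiv fun _ : Fin (n+1) => ℤ).tsum_eq, pow_succ]
    simp only [Fin.consEquiv_apply]
    rw [ENNReal.tsum_prod']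
    have key : ∀ (a : ℤ) (b : Fin n → ℤ),
        ∏ i, f (Fin.cons (α := fun _ : Fin (n+1) => ℤ) a b i) = f a * ∏ i, f (b i) := by
      intro a b
      rw [Fin.prod_univ_succ]
      simp
    simp_rw [key, ENNReal.tsum_mul_left, ENNReal.tsum_mul_right, ih]
    ring

lemma gauss_poisson {σ : ℝ} (hσ : 0 < σ) :
    (∑' n : ℤ, Real.exp (-(n:ℝ)^2 / (4*σ^2))) ≤
      Real.sqrt 2 * ∑' n : ℤ, Real.exp (-(n:ℝ)^2 / (2*σ^2)) := by
  have hπ := Real.pi_pos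
  have h4 : (0:ℝ) < 4*π*σ^2 := by positivity
  have h2 : (0:ℝ) < 2*π*σ^2 := by positivity
  have hA : (∑' n : ℤ, Real.exp (-(n:ℝ)^2 / (4*σ^2))) =
      Real.sqrt (4*π*σ^2) * ∑' n : ℤ, Real.exp (-(4*π^2*σ^2) * (n:ℝ)^2) := by
    calc (∑' n : ℤ, Real.exp (-(n:ℝ)^2 / (4*σ^2)))
        = ∑' n : ℤ, Real.exp (-π * (4*π*σ^2)⁻¹ * (n:ℝ)^2) := by
          congr 1; funext n; congr 1; field_simp
      _ = 1/((4*π*σ^2)⁻¹ ^ (1/2:ℝ)) * ∑' n : ℤ, Real.exp (-π/(4*π*σ^2)⁻¹ * (n:ℝ)^2) :=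
          Real.tsum_exp_neg_mul_int_sq (by positivity)
      _ = Real.sqrt (4*π*σ^2) * ∑' n : ℤ, Real.exp (-(4*π^2*σ^2) * (n:ℝ)^2) := by
          rw [Real.inv_rpow h4.le, one_div, inv_inv, Real.sqrt_eq_rpow]
          congr 1
          exact tsum_congr fun n => by congr 1; rw [div_eq_mul_inv, inv_inv]; ring
  have hB : (∑' n : ℤ, Real.exp (-(n:ℝ)^2 / (2*σ^2))) =
      Real.sqrt (2*π*σ^2) * ∑' n : ℤ, Real.exp (-(2*π^2*σ^2) * (n:ℝ)^2) := by
    calc (∑' n : ℤ, Real.exp (-(n:ℝ)^2 / (2*σ^2)))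
        = ∑' n : ℤ, Real.exp (-π * (2*π*σ^2)⁻¹ * (n:ℝ)^2) := by
          congr 1; funext n; congr 1; field_simp
      _ = 1/((2*π*σ^2)⁻¹ ^ (1/2:ℝ)) * ∑' n : ℤ, Real.exp (-π/(2*π*σ^2)⁻¹ * (n:ℝ)^2) :=
          Real.tsum_exp_neg_mul_int_sq (by positivity)
      _ = Real.sqrt (2*π*σ^2) * ∑' n : ℤ, Real.exp (-(2*π^2*σ^2) * (n:ℝ)^2) := by
          rw [Real.inv_rpow h2.le, one_div, inv_inv, Real.sqrt_eq_rpow]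
          congr 1
          exact tsum_congr fun n => by congr 1; rw [div_eq_mul_inv, inv_inv]; ring
  have hS : (∑' n : ℤ, Real.exp (-(4*π^2*σ^2) * (n:ℝ)^2)) ≤
      ∑' n : ℤ, Real.exp (-(2*π^2*σ^2) * (n:ℝ)^2) := by
    refine Summable.tsum_le_tsum (fun n => Real.exp_le_exp.mpr ?_) (sumG (by positivity))
      (sumG (by positivity))
    nlinarith [sq_nonneg (n:ℝ), mul_pos (mul_pos hπ hπ) (mul_pos hσ hσ)]
  have hsqrt : Real.sqrt (4*π*σ^2) = Real.sqrt 2 * Real.sqrt (2*π*σ^2) := by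
    rw [← Real.sqrt_mul (by norm_num : (0:ℝ) ≤ 2)]
    ring_nf
  rw [hA, hB, hsqrt, mul_assoc]
  refine mul_le_mul_of_nonneg_left ?_ (Real.sqrt_nonneg 2)
  exact mul_le_mul_of_nonneg_left hS (Real.sqrt_nonneg _)

lemma num_base : Real.sqrt 2 / Real.exp (1/2 : ℝ) < (2:ℝ) ^ (-(1:ℝ)/8) := by
  have h8 : ((2:ℝ) ^ (-(1:ℝ)/8)) ^ (8:ℕ) = 1/2 := by
    rw [← Real.rpow_natCast ((2:ℝ) ^ (-(1:ℝ)/8)) 8, ← Real.rpow_mul (by norm_num)]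
    norm_num
  have ha8 : (Real.sqrt 2 / Real.exp (1/2 : ℝ)) ^ (8:ℕ) = 16 / Real.exp 4 := by
    rw [div_pow]
    congr 1
    · rw [show (8:ℕ) = 2*4 from rfl, pow_mul, Real.sq_sqrt (by norm_num : (0:ℝ) ≤ 2)]
      norm_num
    · rw [← Real.exp_nat_mul]
      norm_num
  have hexp : (32:ℝ) < Real.exp 4 := by
    have h1 : (2.7:ℝ) < Real.exp 1 := by
      have := Real.exp_one_gt_d9
      linarith
    have h4 : ((2.7:ℝ)) ^ (4:ℕ) < (Real.exp 1) ^ (4:ℕ) :=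
      pow_lt_pow_left₀ h1 (by norm_num) (by norm_num)
    rw [← Real.exp_nat_mul] at h4
    norm_num at h4 ⊢
    linarith
  have hlt : (Real.sqrt 2 / Real.exp (1/2 : ℝ)) ^ (8:ℕ) < ((2:ℝ) ^ (-(1:ℝ)/8)) ^ (8:ℕ) := by
    rw [h8, ha8, div_lt_div_iff₀ (Real.exp_pos _) (by norm_num)]
    linarith
  exact (pow_lt_pow_iff_left₀ (by positivity) (by positivity) (by norm_num)).mp hlt

lemma num_bound {x : ℝ} (hx0 : 0 ≤ x) (hx : x ≤ Real.sqrt 2) {m : ℕ} (hm : 0 < m) :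
    x ^ m / Real.exp ((m:ℝ)/2) < (2:ℝ) ^ (-(m:ℝ)/8) := by
  calc x ^ m / Real.exp ((m:ℝ)/2)
      ≤ (Real.sqrt 2) ^ m / Real.exp ((m:ℝ)/2) := by gcongr
    _ = (Real.sqrt 2 / Real.exp (1/2:ℝ)) ^ m := by
        rw [div_pow, ← Real.exp_nat_mul]
        congr 2
        ring
    _ < ((2:ℝ) ^ (-(1:ℝ)/8)) ^ m := pow_lt_pow_left₀ num_base (by positivity) hm.ne'
    _ = (2:ℝ) ^ (-(m:ℝ)/8) := by
        rw [← Real.rpow_natCast ((2:ℝ) ^ (-(1:ℝ)/8)) m, ← Real.rpow_mul (by norm_num)]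
        congr 1
        ring

/-- Banaszczyk-type tail bound: if `z ∈ ℤ^m`, `m = ℓ·d`, is sampled
coordinatewise from the discrete Gaussian `D_σ` on `ℤ`, then
`Pr[‖z‖₂ ≤ σ√(2m)] > 1 − 2^{−m/8}`. -/
theorem stmt4 (σ : ℝ) (hσ : 0 < σ) (ℓ d m : ℕ) (hm : m = ℓ * d) (hℓ : 1 < ℓ) (hd : 1 < d)
    (D : PMF ℤ)
    (hD : ∀ x : ℤ, D x = ENNReal.ofReal
      (Real.exp (-(x : ℝ) ^ 2 / (2 * σ ^ 2)) /
        ∑' y : ℤ, Real.exp (-(y : ℝ) ^ 2 / (2 * σ ^ 2))))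
    (Dm : PMF (Fin m → ℤ))
    (hDm : ∀ z : Fin m → ℤ, Dm z = ∏ i, D (z i)) :
    Dm.toOuterMeasure
        {z : Fin m → ℤ | Real.sqrt (∑ i, ((z i : ℝ)) ^ 2) ≤ σ * Real.sqrt (2 * m)} >
      ENNReal.ofReal (1 - 2 ^ (-(m : ℝ) / 8)) := by
  have hm0 : 0 < m := by
    subst hm; exact Nat.mul_pos (by omega) (by omega)
  have h2σ : (0:ℝ) < 2*σ^2 := by positivity
  have h4σ : (0:ℝ) < 4*σ^2 := by positivity
  set B := ∑' y : ℤ, Real.exp (-(y:ℝ)^2 / (2*σ^2)) with hBdef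
  set A := ∑' y : ℤ, Real.exp (-(y:ℝ)^2 / (4*σ^2)) with hAdef
  have hB1 : (1:ℝ) ≤ B := by
    have := Summable.le_tsum (sumG' h2σ) 0 (fun j _ => (Real.exp_pos _).le)
    simpa using this
  have hB0 : (0:ℝ) < B := lt_of_lt_of_le one_pos hB1
  have hA0 : (0:ℝ) ≤ A := tsum_nonneg fun n => (Real.exp_pos _).le
  have hABnn : (0:ℝ) ≤ A / B := div_nonneg hA0 hB0.le
  have hAB : A / B ≤ Real.sqrt 2 := (div_le_iff₀ hB0).mpr (gauss_poisson hσ)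
  set S : Set (Fin m → ℤ) :=
    {z : Fin m → ℤ | Real.sqrt (∑ i, ((z i : ℝ)) ^ 2) ≤ σ * Real.sqrt (2 * m)} with hSdef
  set W : (Fin m → ℤ) → ℝ≥0∞ :=
    fun z => ∏ i, ENNReal.ofReal (Real.exp (((z i : ℝ))^2 / (4*σ^2))) with hWdef
  -- per-coordinate MGF
  have hF : ∀ x : ℤ, D x * ENNReal.ofReal (Real.exp ((x:ℝ)^2 / (4*σ^2)))
      = ENNReal.ofReal (Real.exp (-(x:ℝ)^2 / (4*σ^2)) / B) := by
    intro x
    rw [hD x, ← ENNReal.ofReal_mul (by positivity)]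
    congr 1
    rw [div_mul_eq_mul_div, ← Real.exp_add]
    congr 2
    field_simp
    ring
  have hFsum : (∑' x : ℤ, D x * ENNReal.ofReal (Real.exp ((x:ℝ)^2 / (4*σ^2))))
      = ENNReal.ofReal (A / B) := by
    calc (∑' x : ℤ, D x * ENNReal.ofReal (Real.exp ((x:ℝ)^2 / (4*σ^2))))
        = ∑' x : ℤ, ENNReal.ofReal (Real.exp (-(x:ℝ)^2 / (4*σ^2)) / B) := tsum_congr hF
      _ = ENNReal.ofReal (∑' x : ℤ, Real.exp (-(x:ℝ)^2 / (4*σ^2)) / B) :=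
          (ENNReal.ofReal_tsum_of_nonneg (fun x => by positivity)
            ((sumG' h4σ).div_const B)).symm
      _ = ENNReal.ofReal (A / B) := by rw [tsum_div_const]
  have hE : (∑' z : Fin m → ℤ, Dm z * W z) = ENNReal.ofReal (A / B) ^ m := by
    calc (∑' z : Fin m → ℤ, Dm z * W z)
        = ∑' z : Fin m → ℤ,
            ∏ i, (D (z i) * ENNReal.ofReal (Real.exp (((z i : ℝ))^2 / (4*σ^2)))) := by
          refine tsum_congr fun z => ?_
          rw [hDm z, hWdef, Finset.prod_mul_distrib]
      _ = (∑' x : ℤ, D x * ENNReal.ofReal (Real.exp ((x:ℝ)^2 / (4*σ^2)))) ^ m := by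
          exact tsum_pi_pow (fun x : ℤ => D x * ENNReal.ofReal (Real.exp ((x:ℝ)^2 / (4*σ^2)))) m
      _ = ENNReal.ofReal (A / B) ^ m := by rw [hFsum]
  have hW : ∀ z : Fin m → ℤ,
      W z = ENNReal.ofReal (Real.exp ((∑ i, ((z i : ℝ))^2) / (4*σ^2))) := by
    intro z
    calc W z = ENNReal.ofReal (∏ i, Real.exp (((z i : ℝ))^2 / (4*σ^2))) :=
          (ENNReal.ofReal_prod_of_nonneg (fun i _ => (Real.exp_pos _).le)).symm
      _ = ENNReal.ofReal (Real.exp (∑ i, ((z i : ℝ))^2 / (4*σ^2))) := by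
          rw [Real.exp_sum]
      _ = ENNReal.ofReal (Real.exp ((∑ i, ((z i : ℝ))^2) / (4*σ^2))) := by
          rw [← Finset.sum_div]
  have hbadpt : ∀ z : Fin m → ℤ, z ∈ Sᶜ →
      (m:ℝ)/2 ≤ (∑ i, ((z i : ℝ))^2) / (4*σ^2) := by
    intro z hz
    have hQ0 : (0:ℝ) ≤ ∑ i, ((z i : ℝ))^2 := Finset.sum_nonneg fun i _ => sq_nonneg _
    have hlt : σ * Real.sqrt (2*m) < Real.sqrt (∑ i, ((z i : ℝ))^2) := by
      simpa [hSdef, Set.mem_compl_iff, Set.mem_setOf_eq, not_le] using hz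
    have hsq : (σ * Real.sqrt (2*m))^2 < (∑ i, ((z i : ℝ))^2) := by
      have h := pow_lt_pow_left₀ hlt (by positivity) (two_ne_zero)
      rwa [Real.sq_sqrt hQ0] at h
    have hσm : (σ * Real.sqrt (2*m))^2 = 2*m*σ^2 := by
      rw [mul_pow, Real.sq_sqrt (by positivity : (0:ℝ) ≤ 2*(m:ℝ))]
      ring
    rw [hσm] at hsq
    rw [le_div_iff₀ (by positivity)]
    nlinarith
  -- Markov
  set P := Dm.toOuterMeasure with hPdef
  have markov : P Sᶜ * ENNReal.ofReal (Real.exp ((m:ℝ)/2)) ≤ ENNReal.ofReal (A / B) ^ m := by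
    rw [hPdef, PMF.toOuterMeasure_apply, ← ENNReal.tsum_mul_right, ← hE]
    refine ENNReal.tsum_le_tsum fun z => ?_
    by_cases hz : z ∈ Sᶜ
    · rw [Set.indicator_of_mem hz]
      refine mul_le_mul_right ?_ _
      rw [hW z]
      exact ENNReal.ofReal_le_ofReal (Real.exp_le_exp.mpr (hbadpt z hz))
    · rw [Set.indicator_of_notMem hz, zero_mul]
      exact zero_le
  set δ : ℝ := (A/B)^m / Real.exp ((m:ℝ)/2) with hδdef
  have hδ0 : 0 ≤ δ := by positivity
  have hPbad : P Sᶜ ≤ ENNReal.ofReal δ := by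
    have hc0 : ENNReal.ofReal (Real.exp ((m:ℝ)/2)) ≠ 0 :=
      ne_of_gt (ENNReal.ofReal_pos.mpr (Real.exp_pos _))
    have h := (ENNReal.le_div_iff_mul_le (Or.inl hc0) (Or.inl ENNReal.ofReal_ne_top)).mpr markov
    rwa [← ENNReal.ofReal_pow hABnn, ← ENNReal.ofReal_div_of_pos (Real.exp_pos _)] at h
  set ε : ℝ := (2:ℝ) ^ (-(m:ℝ)/8) with hεdef
  have hδε : δ < ε := num_bound hABnn hAB hm0
  have hε1 : ε ≤ 1 := by
    apply Real.rpow_le_one_of_one_le_of_nonpos (by norm_num)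
    rw [neg_div]
    exact neg_nonpos.mpr (by positivity)
  have hδ1 : δ < 1 := lt_of_lt_of_le hδε hε1
  -- complement splitting
  have hsplit : P S + P Sᶜ = 1 := by
    rw [hPdef, PMF.toOuterMeasure_apply, PMF.toOuterMeasure_apply, ← ENNReal.tsum_add]
    simp_rw [Set.indicator_self_add_compl_apply]
    exact Dm.tsum_coe
  have hbad_ne_top : P Sᶜ ≠ ⊤ := by
    intro h
    rw [h] at hsplit
    simp at hsplit
  have hPS : P S = 1 - P Sᶜ := ENNReal.eq_sub_of_add_eq hbad_ne_top hsplit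
  show P S > ENNReal.ofReal (1 - ε)
  calc ENNReal.ofReal (1 - ε)
      < ENNReal.ofReal (1 - δ) := by
        rw [ENNReal.ofReal_lt_ofReal_iff (by linarith)]
        linarith
    _ = 1 - ENNReal.ofReal δ := by
        rw [ENNReal.ofReal_sub _ hδ0, ENNReal.ofReal_one]
    _ ≤ 1 - P Sᶜ := tsub_le_tsub_left hPbad 1
    _ = P S := hPS.symm
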